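/- Any truncated Toeplitz operator in 𝒯(u) of type α ∈ ℂ has a symbol of the form φ₀ + α·conj(S(Cφ₀)) + c·K₀ where φ₀ ∈ K_u satisfies φ₀(0) = 0 and c ∈ ℂ; and any truncated Toeplitz operator in 𝒯(u) of type ∞ has a symbol of the form conj(φ₀) + c·K₀ where φ₀ ∈ K_u satisfies φ₀(0) = 0 and c ∈ ℂ. -/

import Mathlib

/-! # Setting: truncated Toeplitz operators on model spaces

We work on the circle `𝕋`, realized as `AddCircle (2π)`, with its normalized Haar
(Lebesgue) measure `m`.  `L2` is the Lebesgue space `L²(𝕋, m)`, `H2 ⊆ L2` is the Hardy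
space (the closed span of the nonnegative Fourier monomials), and for an inner function
`u` the model space is `Ku u = H² ⊖ uH²`, with orthogonal projection `Pu u : L² → Ku u`.

For a symbol `Φ`, `IsTTO u Φ A` says that the bounded operator `A` on `Ku u` is the
truncated Toeplitz operator with symbol `Φ`, i.e. `A f = P_u (Φ f)` for every bounded
`f ∈ K_u`; thus `A ∈ 𝒯(u)` iff `∃ Φ ∈ L², IsTTO u Φ A`. -/

open MeasureTheory Complex
open scoped Real ENNReal ComplexConjugate

noncomputable section

namespace TTO

instance fact_two_pi_pos : Fact ((0:ℝ) < 2 * Real.pi) := ⟨by positivity⟩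

/-- The circle, realized additively as `ℝ / 2πℤ`. -/
abbrev Circ : Type := AddCircle (2 * Real.pi)

/-- Normalized Lebesgue measure on the circle. -/
abbrev m : Measure Circ := @AddCircle.haarAddCircle (2 * Real.pi) _

/-- The Lebesgue space `L²` of the circle. -/
abbrev L2 : Type := Lp ℂ 2 m

open scoped Classical in
/-- The element of `L²` determined by a function (junk value `0` if the function is
not square-integrable). -/
def toLp2 (f : Circ → ℂ) : L2 := if h : MemLp f 2 m then h.toLp f else 0

/-- The coordinate function `z` on the circle. -/
def coord : Circ → ℂ := fun w => fourier 1 w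

/-- The Hardy space `H²`: the closed linear span in `L²` of the monomials `zⁿ`, `n ≥ 0`. -/
def H2 : Submodule ℂ L2 :=
  (Submodule.span ℂ (Set.range fun n : ℕ => (fourierLp 2 (n : ℤ) : L2))).topologicalClosure

instance : CompleteSpace H2 :=
  @IsClosed.completeSpace_coe _ _ _ _ (Submodule.isClosed_topologicalClosure _)

/-- The (closed) subspace `uH²` of `L²`. -/
def uH2 (u : Circ → ℂ) : Submodule ℂ L2 :=
  (Submodule.span ℂ {g : L2 | ∃ f : L2, f ∈ H2 ∧
    (g : Circ → ℂ) =ᵐ[m] fun w => u w * (f : Circ → ℂ) w}).topologicalClosure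

/-- The model space `K_u = H² ⊖ uH²`. -/
def Ku (u : Circ → ℂ) : Submodule ℂ L2 := H2 ⊓ (uH2 u)ᗮ

instance completeSpace_Ku (u : Circ → ℂ) : CompleteSpace (Ku u) := by
  have h : IsClosed ((Ku u : Set L2)) := by
    have h1 : IsClosed ((H2 : Set L2)) := Submodule.isClosed_topologicalClosure _
    have h2 : IsClosed (((uH2 u)ᗮ : Set L2)) := Submodule.isClosed_orthogonal _
    have h3 : (Ku u : Set L2) = (H2 : Set L2) ∩ ((uH2 u)ᗮ : Set L2) := by
      simp [Ku]
    rw [h3]; exact h1.inter h2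
  exact @IsClosed.completeSpace_coe _ _ _ _ h

/-- The orthogonal projection `P_u : L² → K_u`. -/
def Pu (u : Circ → ℂ) : L2 →L[ℂ] Ku u := (Ku u).orthogonalProjectionOnto

/-- `u` is an inner function: (essentially bounded) measurable, of unit modulus a.e.,
and belonging to `H²`. -/
def IsInner (u : Circ → ℂ) : Prop :=
  AEStronglyMeasurable u m ∧ (∀ᵐ w ∂m, ‖u w‖ = 1) ∧ toLp2 u ∈ H2

/-- `u` is nonconstant (as an element of `L²`). -/
def Nonconst (u : Circ → ℂ) : Prop := ¬ ∃ c : ℂ, u =ᵐ[m] fun _ => c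

/-- `IsTTO u Φ A` : the bounded operator `A` on the model space `K_u` is the truncated
Toeplitz operator with symbol `Φ`, i.e. `A f = P_u (Φ · f)` for every bounded `f ∈ K_u`.
(`A ∈ 𝒯(u)` with symbol `Φ`.) -/
def IsTTO (u Φ : Circ → ℂ) (A : Ku u →L[ℂ] Ku u) : Prop :=
  ∀ f : Ku u, MemLp ((f : L2) : Circ → ℂ) ⊤ m →
    A f = Pu u (toLp2 fun w => Φ w * ((f : L2) : Circ → ℂ) w)

/-- `A ∈ 𝒯(u)`: `A` is a (bounded) truncated Toeplitz operator, i.e. it has some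
symbol in `L²`. -/
def MemTTOs (u : Circ → ℂ) (A : Ku u →L[ℂ] Ku u) : Prop :=
  ∃ Φ : Circ → ℂ, MemLp Φ 2 m ∧ IsTTO u Φ A

/-- Equality of the two (densely defined) truncated Toeplitz operators with symbols
`Φ` and `Ψ`: they agree on all bounded elements of `K_u`. -/
def TTOeq (u Φ Ψ : Circ → ℂ) : Prop :=
  ∀ f : Ku u, MemLp ((f : L2) : Circ → ℂ) ⊤ m →
    Pu u (toLp2 fun w => Φ w * ((f : L2) : Circ → ℂ) w) =
      Pu u (toLp2 fun w => Ψ w * ((f : L2) : Circ → ℂ) w)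

/-- Evaluation at the origin: for `f ∈ H²`, the value `f(0)` of the holomorphic
extension is `∫ f dm` (the zeroth Fourier coefficient). -/
def ev0 (f : Circ → ℂ) : ℂ := ∫ w, f w ∂m

/-- The reproducing kernel `K₀ = 1 − conj(u(0))·u` of `K_u` at `0`, as a function. -/
def K0fun (u : Circ → ℂ) : Circ → ℂ := fun w => 1 - conj (ev0 u) * u w

/-- `K₀` as an element of `K_u`. -/
def K0 (u : Circ → ℂ) : Ku u := Pu u (toLp2 (K0fun u))

/-- The conjugate kernel `CK₀ = (u − u(0))/z`, as a function. -/
def CK0fun (u : Circ → ℂ) : Circ → ℂ := fun w => (u w - ev0 u) / coord w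

/-- `CK₀` as an element of `K_u`. -/
def CK0 (u : Circ → ℂ) : Ku u := Pu u (toLp2 (CK0fun u))

/-- The conjugation `C f = u · conj(z f)`, as a map into `L²`. -/
def CfunL2 (u f : Circ → ℂ) : L2 := toLp2 fun w => u w * conj (coord w * f w)

/-- The conjugation `C` on the model space `K_u`.  (Since `C` maps `K_u` onto itself,
post-composing with `P_u` realizes it as a map `K_u → K_u`.) -/
def Cop (u : Circ → ℂ) (f : Ku u) : Ku u := Pu u (CfunL2 u ((f : L2) : Circ → ℂ))

lemma smul_fun_eq_mul (g f : Circ → ℂ) : g • f = fun w => g w * f w := rfl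

lemma memℒp_mul_of_top {g : Circ → ℂ} (hg : MemLp g ⊤ m) (f : L2) :
    MemLp (fun w => g w * (f : Circ → ℂ) w) 2 m := by
  have h : MemLp (g • ((f : L2) : Circ → ℂ)) 2 m := (Lp.memLp f).smul hg
  rwa [smul_fun_eq_mul] at h

lemma memℒp_top_coord : MemLp coord ⊤ m := by
  refine memLp_top_of_bound ((map_continuous (fourier 1)).aestronglyMeasurable) 1 ?_
  exact Filter.Eventually.of_forall fun w => le_of_eq (Circle.norm_coe _)

/-- Multiplication by an essentially bounded function, as a bounded operator on `L²`. -/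
def mulCLM (g : Circ → ℂ) (hg : MemLp g ⊤ m) : L2 →L[ℂ] L2 :=
  LinearMap.mkContinuous
    { toFun := fun f => (memℒp_mul_of_top hg f).toLp _
      map_add' := by
        intro f₁ f₂
        apply Lp.ext
        filter_upwards [MemLp.coeFn_toLp (memℒp_mul_of_top hg (f₁ + f₂)),
          Lp.coeFn_add ((memℒp_mul_of_top hg f₁).toLp _) ((memℒp_mul_of_top hg f₂).toLp _),
          MemLp.coeFn_toLp (memℒp_mul_of_top hg f₁),
          MemLp.coeFn_toLp (memℒp_mul_of_top hg f₂),
          Lp.coeFn_add f₁ f₂] with w e0 e1 e2 e3 e4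
        simp only [e0, e1, Pi.add_apply, e2, e3, e4, mul_add]
      map_smul' := by
        intro c f
        apply Lp.ext
        filter_upwards [MemLp.coeFn_toLp (memℒp_mul_of_top hg (c • f)),
          Lp.coeFn_smul c ((memℒp_mul_of_top hg f).toLp _),
          MemLp.coeFn_toLp (memℒp_mul_of_top hg f),
          Lp.coeFn_smul c f] with w e0 e1 e2 e3
        simp only [e0, RingHom.id_apply, e1, Pi.smul_apply, e2, e3, smul_eq_mul]
        ring }
    (eLpNorm g ⊤ m).toReal
    (by
      intro f
      have hb : eLpNorm (fun w => g w * ((f : L2) : Circ → ℂ) w) 2 m ≤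
          eLpNorm g ⊤ m * eLpNorm ((f : L2) : Circ → ℂ) 2 m := by
        have h := eLpNorm_smul_le_eLpNorm_top_mul_eLpNorm 2 (Lp.aestronglyMeasurable f) g
        rwa [smul_fun_eq_mul] at h
      dsimp only [LinearMap.coe_mk, AddHom.coe_mk]
      rw [Lp.norm_toLp, Lp.norm_def, ← ENNReal.toReal_mul]
      exact ENNReal.toReal_mono
        (ENNReal.mul_ne_top hg.eLpNorm_ne_top (Lp.memLp f).eLpNorm_ne_top) hb)

/-- The compressed shift `S = A_z` on the model space `K_u`. -/
def Sop (u : Circ → ℂ) : Ku u →L[ℂ] Ku u :=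
  (Pu u).comp ((mulCLM coord memℒp_top_coord).comp (Ku u).subtypeL)

/-- The rank one operator `f ⊗ g : h ↦ ⟨h, g⟩ f` (inner product linear in the first slot,
as in the paper). -/
def rankOne {E : Type*} [NormedAddCommGroup E] [InnerProductSpace ℂ E] (f g : E) :
    E →L[ℂ] E :=
  (innerSL ℂ g).smulRight f

/-- The modified (generalized) shift
`S_α = S + (α/(1 − α·conj(u(0)))) K₀ ⊗ CK₀` on `K_u`. -/
def Salpha (u : Circ → ℂ) (α : ℂ) : Ku u →L[ℂ] Ku u :=
  Sop u + (α / (1 - α * conj (ev0 u))) • rankOne (K0 u) (CK0 u)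

/-- The symbol `φ + α·conj(S(Cφ)) + c` associated with `φ ∈ K_u`, `α, c ∈ ℂ`. -/
def typeSymbol (u : Circ → ℂ) (α : ℂ) (φ : Ku u) (c : ℂ) : Circ → ℂ :=
  fun w => ((φ : L2) : Circ → ℂ) w +
    α * conj (((Sop u (Cop u φ) : L2) : Circ → ℂ) w) + c

/-- `A ∈ 𝒯(u)` is of type `α ∈ ℂ`: it has a symbol of the form `φ + α·conj(S(Cφ)) + c`
with `φ ∈ K_u`, `c ∈ ℂ`. -/
def IsTypeC (u : Circ → ℂ) (α : ℂ) (A : Ku u →L[ℂ] Ku u) : Prop :=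
  ∃ (φ : Ku u) (c : ℂ), IsTTO u (typeSymbol u α φ c) A

/-- `A ∈ 𝒯(u)` is of type `∞`: it has an antiholomorphic symbol `conj ψ`, `ψ ∈ H²`. -/
def IsTypeInf (u : Circ → ℂ) (A : Ku u →L[ℂ] Ku u) : Prop :=
  ∃ ψ : Circ → ℂ, MemLp ψ 2 m ∧ toLp2 ψ ∈ H2 ∧ IsTTO u (fun w => conj (ψ w)) A

/-- Type over the Riemann sphere `ℂ* = ℂ ∪ {∞}`, encoded as `Option ℂ`
(`none` being the point at infinity). -/
def IsTypeS (u : Circ → ℂ) (A : Ku u →L[ℂ] Ku u) : Option ℂ → Prop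
  | none => IsTypeInf u A
  | some α => IsTypeC u α A

/-- The self-map `α ↦ conj(α)⁻¹` of the Riemann sphere `ℂ* = ℂ ∪ {∞}` (encoded as
`Option ℂ`, `none` being `∞`), with the conventions `0⁻¹ = ∞`, `∞⁻¹ = 0`,
`conj ∞ = ∞`. -/
def sphereInvConj : Option ℂ → Option ℂ
  | none => some 0
  | some α => if α = 0 then none else some (conj α)⁻¹

/-- The holomorphic (Cauchy) extension of a boundary function to the disc:
`f(z) = ∫ f(w)/(1 − z·conj w) dm(w)`; for `f ∈ H²` and `|z| < 1` this is the value at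
`z` of the holomorphic extension of `f`. -/
def cauchyExt (f : Circ → ℂ) (z : ℂ) : ℂ := ∫ w, f w / (1 - z * conj (coord w)) ∂m

/-- A Stolz (nontangential approach) region at the boundary point `ζ` with aperture
parameter `M`. -/
def stolz (ζ : ℂ) (M : ℝ) : Set ℂ := {z : ℂ | ‖z‖ < 1 ∧ ‖ζ - z‖ < M * (1 - ‖z‖)}

/-- `f` has nontangential limit `L` at the boundary point `ζ`. -/
def NTlim (f : ℂ → ℂ) (ζ L : ℂ) : Prop :=
  ∀ M : ℝ, 1 < M → Filter.Tendsto f (nhdsWithin ζ (stolz ζ M)) (nhds L)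

/-- `u` has an angular derivative in the sense of Caratheodory at the boundary point
`ζ`, with nontangential limits `uζ` (of unit modulus) for `u` and `u'ζ` for `u′`. -/
def HasADC (u : Circ → ℂ) (ζ uζ u'ζ : ℂ) : Prop :=
  ‖ζ‖ = 1 ∧ ‖uζ‖ = 1 ∧ NTlim (cauchyExt u) ζ uζ ∧ NTlim (deriv (cauchyExt u)) ζ u'ζ

end TTO
namespace TTO

local notation "⟪" x ", " y "⟫" => @inner ℂ _ _ x y

variable {u : Circ → ℂ}

lemma toLp2_coeFn {f : Circ → ℂ} (h : MemLp f 2 m) : (toLp2 f : Circ → ℂ) =ᵐ[m] f := by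
  rw [toLp2, dif_pos h]; exact h.coeFn_toLp

lemma toLp2_congr {f g : Circ → ℂ} (hf : MemLp f 2 m) (h : f =ᵐ[m] g) : toLp2 f = toLp2 g := by
  have hg : MemLp g 2 m := hf.ae_eq h
  rw [toLp2, toLp2, dif_pos hf, dif_pos hg]
  exact MemLp.toLp_congr _ _ h

lemma inner_eq_integral (f g : L2) :
    ⟪f, g⟫ = ∫ w, conj ((f : Circ → ℂ) w) * (g : Circ → ℂ) w ∂m := by
  rw [MeasureTheory.L2.inner_def]
  simp [RCLike.inner_apply]
  exact integral_congr_ae (Filter.Eventually.of_forall fun a => mul_comm _ _)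

lemma inner_eq_integral' {f g : L2} {f' g' : Circ → ℂ}
    (hf : (f : Circ → ℂ) =ᵐ[m] f') (hg : (g : Circ → ℂ) =ᵐ[m] g') :
    ⟪f, g⟫ = ∫ w, conj (f' w) * g' w ∂m := by
  rw [inner_eq_integral]
  refine integral_congr_ae ?_
  filter_upwards [hf, hg] with w h1 h2
  rw [h1, h2]

lemma integrable_mul2 {f g : Circ → ℂ} (hf : MemLp f 2 m) (hg : MemLp g 2 m) :
    Integrable (fun w => f w * g w) m := by
  have h : MemLp (f • g) 1 m := hg.smul hf
  rw [smul_fun_eq_mul] at h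
  exact memLp_one_iff_integrable.mp h

lemma integrable_L2 (f : L2) : Integrable ((f : L2) : Circ → ℂ) m :=
  (Lp.memLp f).integrable (by norm_num)

lemma memℒp_conj {f : Circ → ℂ} (hf : MemLp f 2 m) : MemLp (fun w => conj (f w)) 2 m :=
  ⟨Complex.continuous_conj.comp_aestronglyMeasurable hf.1, by
    rw [show (fun w => conj (f w)) = conj f from rfl, eLpNorm_conj]; exact hf.2⟩

end TTO
namespace TTO

local notation "⟪" x ", " y "⟫" => @inner ℂ _ _ x y

variable {u : Circ → ℂ}

/-- Short name for the Fourier monomials in `L²`. -/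
abbrev eL (n : ℤ) : L2 := fourierLp 2 n

lemma eL_coe (n : ℤ) : ((eL n : L2) : Circ → ℂ) =ᵐ[m] fun w => fourier n w :=
  coeFn_fourierLp 2 n

lemma inner_eL_eL (j n : ℤ) : ⟪(eL j : L2), (eL n : L2)⟫ = if j = n then 1 else 0 :=
  orthonormal_iff_ite.mp orthonormal_fourier j n

lemma eL_mem_H2 (n : ℕ) : (eL n : L2) ∈ H2 :=
  Submodule.le_topologicalClosure _ (Submodule.subset_span ⟨n, rfl⟩)

lemma integral_fourier (k : ℤ) : (∫ w, fourier k w ∂m) = if k = 0 then 1 else 0 := by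
  have h := inner_eL_eL (-k) 0
  rw [inner_eq_integral' (eL_coe (-k)) (eL_coe 0)] at h
  have : (∫ w, conj (fourier (-k) w) * fourier 0 w ∂m) = ∫ w, fourier k w ∂m := by
    refine integral_congr_ae (Filter.Eventually.of_forall fun w => ?_)
    simp only [fourier_zero, mul_one, ← fourier_neg, neg_neg]
  rw [this] at h
  rw [h]
  simp [neg_eq_zero]

lemma integrable_bdd_L2 {b f : Circ → ℂ} (hb : MemLp b ⊤ m) (hf : MemLp f 2 m) :
    Integrable (fun w => b w * f w) m := by
  have h2 : MemLp (fun w => b w * f w) 2 m := by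
    have := hf.smul (r := 2) hb
    rwa [smul_fun_eq_mul] at this
  exact h2.integrable (by norm_num)

/-- A continuous linear functional vanishing on all nonnegative monomials vanishes on `H2`. -/
lemma vanish_on_H2 (L : L2 →L[ℂ] ℂ) (h : ∀ n : ℕ, L (eL n) = 0) {f : L2} (hf : f ∈ H2) :
    L f = 0 := by
  have hker : H2 ≤ LinearMap.ker (L : L2 →ₗ[ℂ] ℂ) := by
    refine Submodule.topologicalClosure_minimal _ ?_ ?_
    · refine Submodule.span_le.mpr ?_
      rintro x ⟨n, rfl⟩
      exact h n
    · exact ContinuousLinearMap.isClosed_ker L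
  exact hker hf

/-- The conjugation as a map of `L²` (plain function). -/
def conjL2 (f : L2) : L2 := toLp2 fun w => conj ((f : Circ → ℂ) w)

lemma conjL2_coe (f : L2) : ((conjL2 f : L2) : Circ → ℂ) =ᵐ[m] fun w => conj ((f : Circ → ℂ) w) :=
  toLp2_coeFn (memℒp_conj (Lp.memLp f))

/-- The functional `g ↦ ∫ h g`. -/
def intMulCLM (h : L2) : L2 →L[ℂ] ℂ := innerSL ℂ (conjL2 h)

lemma intMulCLM_eq (h g : L2) :
    intMulCLM h g = ∫ w, (h : Circ → ℂ) w * (g : Circ → ℂ) w ∂m := by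
  rw [intMulCLM, innerSL_apply_apply, inner_eq_integral]
  refine integral_congr_ae ?_
  filter_upwards [conjL2_coe h] with w hw
  rw [hw, RingHomCompTriple.comp_apply, RingHom.id_apply]

/-- The functional `f ↦ ∫ f`. -/
def evCLM : L2 →L[ℂ] ℂ := innerSL ℂ (eL 0)

lemma evCLM_eq (g : L2) : evCLM g = ∫ w, (g : Circ → ℂ) w ∂m := by
  rw [evCLM, innerSL_apply_apply, inner_eq_integral]
  refine integral_congr_ae ?_
  filter_upwards [eL_coe 0] with w hw
  rw [hw, fourier_zero, map_one, one_mul]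

lemma mulCLM_eq_toLp2 {b : Circ → ℂ} (hb : MemLp b ⊤ m) (f : L2) :
    mulCLM b hb f = toLp2 fun w => b w * (f : Circ → ℂ) w := by
  rw [toLp2, dif_pos (memℒp_mul_of_top hb f)]
  rfl

lemma mulCLM_coe {b : Circ → ℂ} (hb : MemLp b ⊤ m) (f : L2) :
    ((mulCLM b hb f : L2) : Circ → ℂ) =ᵐ[m] fun w => b w * (f : Circ → ℂ) w := by
  rw [mulCLM_eq_toLp2]
  exact toLp2_coeFn (memℒp_mul_of_top hb f)

end TTO
namespace TTO

local notation "⟪" x ", " y "⟫" => @inner ℂ _ _ x y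

variable {u : Circ → ℂ}

lemma memℒp_top_mul {a c : Circ → ℂ} (ha : MemLp a ⊤ m) (hc : MemLp c ⊤ m) :
    MemLp (fun w => a w * c w) ⊤ m := by
  have h := hc.smul (r := ⊤) ha
  rwa [smul_fun_eq_mul] at h

lemma memℒp2_of_top {f : Circ → ℂ} (h : MemLp f ⊤ m) : MemLp f 2 m :=
  h.mono_exponent le_top

lemma memℒp_top_fourier (n : ℤ) : MemLp (fun w => fourier n w) ⊤ m :=
  memLp_top_of_bound ((map_continuous (fourier n)).aestronglyMeasurable) 1
    (Filter.Eventually.of_forall fun w => le_of_eq (Circle.norm_coe _))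

lemma H2_ortho {f : L2} (hf : f ∈ H2) {j : ℤ} (hj : j < 0) : ⟪(eL j : L2), f⟫ = 0 := by
  refine vanish_on_H2 (innerSL ℂ (eL j)) (fun n => ?_) hf
  rw [innerSL_apply_apply, inner_eL_eL, if_neg]
  omega

lemma mem_H2_of_ortho {f : L2} (h : ∀ j : ℤ, j < 0 → ⟪(eL j : L2), f⟫ = 0) : f ∈ H2 := by
  set p := H2.orthogonalProjectionOnto f with hp
  have hr : f - (p : L2) ∈ H2ᗮ := Submodule.sub_starProjection_mem_orthogonal f
  have hrepr : fourierBasis.repr (f - (p : L2)) = 0 := by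
    ext i
    have hz : ((0 : lp (fun _ : ℤ => ℂ) 2) : ℤ → ℂ) i = 0 := rfl
    rw [hz, fourierBasis.repr_apply_apply]
    have hcoe : fourierBasis i = eL i := by rw [coe_fourierBasis]
    rw [hcoe]
    rcases lt_or_ge i 0 with hi | hi
    · rw [inner_sub_right, h i hi, H2_ortho p.2 hi, sub_zero]
    · obtain ⟨n, rfl⟩ := Int.eq_ofNat_of_zero_le hi
      exact (Submodule.mem_orthogonal H2 (f - (p : L2))).mp hr (eL n) (eL_mem_H2 n)
  have hzero : f - (p : L2) = 0 := fourierBasis.repr.map_eq_zero_iff.mp hrepr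
  rw [sub_eq_zero.mp hzero]
  exact p.2

/-- Master integral identity: if `b` is bounded and `∫ b zʲ = 0` for all `j ≥ 1`, then
for `f, g ∈ H²` we have `∫ b f g = (∫ b)(∫ f)(∫ g)`. -/
lemma master {b : Circ → ℂ} (hb : MemLp b ⊤ m)
    (h1 : ∀ j : ℤ, 0 < j → (∫ w, b w * fourier j w ∂m) = 0)
    {f g : L2} (hf : f ∈ H2) (hg : g ∈ H2) :
    (∫ w, b w * (f : Circ → ℂ) w * (g : Circ → ℂ) w ∂m) =
      (∫ w, b w ∂m) * (∫ w, (f : Circ → ℂ) w ∂m) * (∫ w, (g : Circ → ℂ) w ∂m) := by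
  have hbint : ∀ (k : ℤ) (x : L2), intMulCLM (toLp2 fun w => b w * fourier k w) x =
      ∫ w, b w * fourier k w * (x : Circ → ℂ) w ∂m := by
    intro k x
    rw [intMulCLM_eq]
    refine integral_congr_ae ?_
    filter_upwards [toLp2_coeFn (memℒp2_of_top (memℒp_top_mul hb (memℒp_top_fourier k)))]
      with w hw
    rw [hw]
  have hbe : ∀ (k : ℤ) (i : ℕ), (∫ w, b w * fourier k w * ((eL i : L2) : Circ → ℂ) w ∂m) =
      ∫ w, b w * fourier (k + i) w ∂m := by
    intro k i
    refine integral_congr_ae ?_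
    filter_upwards [eL_coe (i : ℤ)] with w hw
    rw [hw, fourier_add, mul_assoc]
  -- step 1 : the case `f = eL n`.
  have key : ∀ n : ℕ, ∀ g : L2, g ∈ H2 →
      (∫ w, b w * fourier (n : ℤ) w * (g : Circ → ℂ) w ∂m) =
        (if n = 0 then (∫ w, b w ∂m) else 0) * ∫ w, (g : Circ → ℂ) w ∂m := by
    intro n g hg
    set c : ℂ := if n = 0 then (∫ w, b w ∂m) else 0 with hc
    set L : L2 →L[ℂ] ℂ := intMulCLM (toLp2 fun w => b w * fourier (n : ℤ) w) - c • evCLM with hL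
    have hLval : ∀ x : L2, L x =
        (∫ w, b w * fourier (n : ℤ) w * (x : Circ → ℂ) w ∂m) -
          c * ∫ w, (x : Circ → ℂ) w ∂m := by
      intro x
      rw [hL, ContinuousLinearMap.sub_apply, ContinuousLinearMap.smul_apply, evCLM_eq,
        hbint, smul_eq_mul]
    have hLz : L g = 0 := by
      refine vanish_on_H2 L (fun i => ?_) hg
      rw [hLval, hbe]
      have hei : (∫ w, ((eL i : L2) : Circ → ℂ) w ∂m) = if i = 0 then 1 else 0 := by
        rw [integral_congr_ae (eL_coe (i : ℤ)), integral_fourier]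
        simp
      rw [hei]
      rcases Nat.eq_zero_or_pos n with hn | hn
      · subst hn
        rcases Nat.eq_zero_or_pos i with hi | hi
        · subst hi
          rw [if_pos rfl, mul_one, hc, if_pos rfl]
          refine sub_eq_zero.mpr ?_
          refine integral_congr_ae (Filter.Eventually.of_forall fun w => ?_)
          simp
        · have hne : ¬ (i = 0) := by omega
          rw [if_neg hne, mul_zero, sub_zero, h1 _ (by push_cast; omega)]
      · have hni : (0 : ℤ) < (n : ℤ) + (i : ℤ) := by positivity
        have hne : ¬ (n = 0) := by omega
        rw [h1 _ hni, hc, if_neg hne]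
        simp
    rw [hLval] at hLz
    rw [sub_eq_zero.mp hLz]
  -- step 2 : general f.
  set β : ℂ := ∫ w, b w ∂m with hβ
  set L : L2 →L[ℂ] ℂ := intMulCLM (toLp2 fun w => b w * (g : Circ → ℂ) w) -
    (β * ∫ w, (g : Circ → ℂ) w ∂m) • evCLM with hL
  have hLval : ∀ x : L2, L x =
      (∫ w, b w * (x : Circ → ℂ) w * (g : Circ → ℂ) w ∂m) -
        (β * ∫ w, (g : Circ → ℂ) w ∂m) * ∫ w, (x : Circ → ℂ) w ∂m := by
    intro x
    rw [hL, ContinuousLinearMap.sub_apply, ContinuousLinearMap.smul_apply, evCLM_eq,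
      intMulCLM_eq, smul_eq_mul]
    congr 1
    refine integral_congr_ae ?_
    filter_upwards [toLp2_coeFn (memℒp_mul_of_top hb g)] with w hw
    rw [hw]
    ring
  have hLz : L f = 0 := by
    refine vanish_on_H2 L (fun i => ?_) hf
    rw [hLval]
    have h2 : (∫ w, b w * ((eL i : L2) : Circ → ℂ) w * (g : Circ → ℂ) w ∂m) =
        ∫ w, b w * fourier (i : ℤ) w * (g : Circ → ℂ) w ∂m := by
      refine integral_congr_ae ?_
      filter_upwards [eL_coe (i : ℤ)] with w hw
      rw [hw]
    have hei : (∫ w, ((eL i : L2) : Circ → ℂ) w ∂m) = if i = 0 then 1 else 0 := by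
      rw [integral_congr_ae (eL_coe (i : ℤ)), integral_fourier]
      simp
    rw [h2, key i g hg, hei]
    rcases Nat.eq_zero_or_pos i with hi | hi
    · subst hi
      rw [if_pos rfl, if_pos rfl, mul_one]
      ring
    · rw [if_neg (by omega), if_neg (by omega)]
      simp
  rw [hLval] at hLz
  have := sub_eq_zero.mp hLz
  rw [this]
  ring

end TTO
namespace TTO

local notation "⟪" x ", " y "⟫" => @inner ℂ _ _ x y

variable {u : Circ → ℂ}

lemma hu_top (hu : IsInner u) : MemLp u ⊤ m :=
  memLp_top_of_bound hu.1 1 (hu.2.1.mono fun _ h => le_of_eq h)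

lemma hu_2 (hu : IsInner u) : MemLp u 2 m := memℒp2_of_top (hu_top hu)

lemma toLp2_u_coe (hu : IsInner u) : ((toLp2 u : L2) : Circ → ℂ) =ᵐ[m] u :=
  toLp2_coeFn (hu_2 hu)

lemma memℒp_top_conj {f : Circ → ℂ} (h : MemLp f ⊤ m) : MemLp (fun w => conj (f w)) ⊤ m :=
  MemLp.of_le h (Complex.continuous_conj.comp_aestronglyMeasurable h.1)
    (Filter.Eventually.of_forall fun w => by simp)

lemma conj_u_mul_u (hu : IsInner u) : ∀ᵐ w ∂m, conj (u w) * u w = 1 := by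
  filter_upwards [hu.2.1] with w hw
  have h2 : Complex.normSq (u w) = 1 := by
    rw [← Complex.sq_norm, hw, one_pow]
  rw [mul_comm, Complex.mul_conj, h2, Complex.ofReal_one]

lemma mem_uH2 {f : L2} (hf : f ∈ H2) {g : L2}
    (hg : (g : Circ → ℂ) =ᵐ[m] fun w => u w * (f : Circ → ℂ) w) : g ∈ uH2 u :=
  Submodule.le_topologicalClosure _ (Submodule.subset_span ⟨f, hf, hg⟩)

lemma mem_orth_uH2 {x : L2}
    (h : ∀ f : L2, f ∈ H2 → ∀ g : L2,
      ((g : Circ → ℂ) =ᵐ[m] fun w => u w * (f : Circ → ℂ) w) → ⟪x, g⟫ = 0) :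
    x ∈ (uH2 u)ᗮ := by
  rw [Submodule.mem_orthogonal']
  intro y hy
  have hker : uH2 u ≤ LinearMap.ker ((innerSL ℂ x : L2 →L[ℂ] ℂ) : L2 →ₗ[ℂ] ℂ) := by
    refine Submodule.topologicalClosure_minimal _ ?_ (ContinuousLinearMap.isClosed_ker _)
    refine Submodule.span_le.mpr ?_
    rintro g ⟨f, hf, hg⟩
    exact h f hf g hg
  exact hker hy

lemma Ku_le_H2 : Ku u ≤ H2 := inf_le_left

lemma Ku_orth : Ku u ≤ (uH2 u)ᗮ := inf_le_right

lemma uH2_le_orthKu : uH2 u ≤ (Ku u)ᗮ := by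
  intro y hy
  rw [Submodule.mem_orthogonal]
  intro k hk
  exact (Submodule.mem_orthogonal' _ _).mp (Ku_orth hk) y hy

lemma Pu_zero {x : L2} (hx : x ∈ (Ku u)ᗮ) : Pu u x = 0 :=
  Submodule.orthogonalProjectionOnto_apply_of_mem_orthogonal hx

lemma Pu_id {x : L2} (hx : x ∈ Ku u) : Pu u x = ⟨x, hx⟩ :=
  Submodule.orthogonalProjectionOnto_mem_subspace_eq_self (⟨x, hx⟩ : Ku u)

lemma int_u_mul (hu : IsInner u) {f : L2} (hf : f ∈ H2) :
    (∫ w, u w * (f : Circ → ℂ) w ∂m) = ev0 u * ∫ w, (f : Circ → ℂ) w ∂m := by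
  have hb : MemLp (fun _ : Circ => (1 : ℂ)) ⊤ m := memLp_const 1
  have h1 : ∀ j : ℤ, 0 < j → (∫ w, (1 : ℂ) * fourier j w ∂m) = 0 := by
    intro j hj
    simp only [one_mul]
    rw [integral_fourier, if_neg (by omega)]
  have hm := master hb h1 hu.2.2 hf
  simp only [one_mul] at hm
  have hiu : (∫ w, ((toLp2 u : L2) : Circ → ℂ) w ∂m) = ev0 u :=
    integral_congr_ae (toLp2_u_coe hu)
  have hl : (∫ w, ((toLp2 u : L2) : Circ → ℂ) w * (f : Circ → ℂ) w ∂m) =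
      ∫ w, u w * (f : Circ → ℂ) w ∂m := by
    refine integral_congr_ae ?_
    filter_upwards [toLp2_u_coe hu] with w hw
    rw [hw]
  rw [hl, hiu] at hm
  rw [hm]
  simp

lemma memℒp_K0fun_top (hu : IsInner u) : MemLp (K0fun u) ⊤ m := by
  have : MemLp (fun _ : Circ => (1 : ℂ)) ⊤ m := memLp_const 1
  exact this.sub ((hu_top hu).const_mul _)

lemma K0elt_eq (hu : IsInner u) :
    toLp2 (K0fun u) = eL 0 - (conj (ev0 u)) • toLp2 u := by
  apply Lp.ext
  filter_upwards [toLp2_coeFn (memℒp2_of_top (memℒp_K0fun_top hu)),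
    Lp.coeFn_sub (eL 0 : L2) ((conj (ev0 u)) • toLp2 u),
    Lp.coeFn_smul (conj (ev0 u)) (toLp2 u), eL_coe 0, toLp2_u_coe hu] with w h0 h1 h2 h3 h4
  rw [h0, h1, Pi.sub_apply, h2, Pi.smul_apply, h3, h4, fourier_zero, K0fun, smul_eq_mul]

lemma K0_mem (hu : IsInner u) : toLp2 (K0fun u) ∈ Ku u := by
  rw [Ku, Submodule.mem_inf]
  constructor
  · rw [K0elt_eq hu]
    exact sub_mem (eL_mem_H2 0) (Submodule.smul_mem _ _ hu.2.2)
  · refine mem_orth_uH2 fun f hf g hg => ?_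
    have hint : ⟪(toLp2 (K0fun u) : L2), g⟫ =
        ∫ w, (u w * (f : Circ → ℂ) w - ev0 u * ((conj (u w) * u w) * (f : Circ → ℂ) w)) ∂m := by
      rw [inner_eq_integral' (toLp2_coeFn (memℒp2_of_top (memℒp_K0fun_top hu))) hg]
      refine integral_congr_ae (Filter.Eventually.of_forall fun w => ?_)
      simp only [K0fun, map_sub, map_mul, map_one, Complex.conj_conj]
      ring
    rw [hint]
    have hint2 : (∫ w, (u w * (f : Circ → ℂ) w -
        ev0 u * ((conj (u w) * u w) * (f : Circ → ℂ) w)) ∂m) =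
        ∫ w, (u w * (f : Circ → ℂ) w - ev0 u * (f : Circ → ℂ) w) ∂m := by
      refine integral_congr_ae ?_
      filter_upwards [conj_u_mul_u hu] with w hw
      rw [hw, one_mul]
    rw [hint2, integral_sub (integrable_bdd_L2 (hu_top hu) (Lp.memLp f))
      ((integrable_L2 f).const_mul _), integral_const_mul, int_u_mul hu hf]
    ring

end TTO
namespace TTO

local notation "⟪" x ", " y "⟫" => @inner ℂ _ _ x y

variable {u : Circ → ℂ}

lemma K0_coe (hu : IsInner u) : ((K0 u : Ku u) : L2) = toLp2 (K0fun u) := by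
  rw [K0, Pu_id (K0_mem hu)]

/-- `1 - |u(0)|² ≠ 0` for a nonconstant inner `u`. -/
lemma one_sub_ne (hu : IsInner u) (hnc : Nonconst u) :
    (1 : ℂ) - conj (ev0 u) * ev0 u ≠ 0 := by
  intro hz
  apply hnc
  set d : L2 := toLp2 u - ev0 u • eL 0 with hd
  have h00 : ⟪(eL 0 : L2), (eL 0 : L2)⟫ = 1 := by rw [inner_eL_eL, if_pos rfl]
  have h0u : ⟪(eL 0 : L2), (toLp2 u : L2)⟫ = ev0 u := by
    rw [inner_eq_integral' (eL_coe 0) (toLp2_u_coe hu)]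
    rw [ev0]
    refine integral_congr_ae (Filter.Eventually.of_forall fun w => ?_)
    simp
  have hu0 : ⟪(toLp2 u : L2), (eL 0 : L2)⟫ = conj (ev0 u) := by
    rw [← inner_conj_symm, h0u]
  have huu : ⟪(toLp2 u : L2), (toLp2 u : L2)⟫ = 1 := by
    rw [inner_eq_integral' (toLp2_u_coe hu) (toLp2_u_coe hu)]
    have : (∫ w, conj (u w) * u w ∂m) = ∫ _w, (1 : ℂ) ∂m :=
      integral_congr_ae (conj_u_mul_u hu)
    rw [this]
    simp
  have hdd : ⟪d, d⟫ = 1 - conj (ev0 u) * ev0 u := by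
    rw [hd, inner_sub_left, inner_sub_right, inner_sub_right, inner_smul_left,
      inner_smul_right, inner_smul_left, inner_smul_right, h00, h0u, hu0, huu]
    ring
  have hd0 : d = 0 := by
    rw [← @inner_self_eq_zero ℂ, hdd, hz]
  have : toLp2 u = ev0 u • eL 0 := by
    rw [sub_eq_zero.mp hd0]
  refine ⟨ev0 u, ?_⟩
  have h1 := toLp2_u_coe hu
  rw [this] at h1
  filter_upwards [h1, Lp.coeFn_smul (ev0 u) (eL 0 : L2), eL_coe 0] with w hw h2 h3
  rw [← hw, h2, Pi.smul_apply, h3, fourier_zero, smul_eq_mul, mul_one]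

lemma memℒp_C {p : ℝ≥0∞} (hu : IsInner u) {f : Circ → ℂ} (hf : MemLp f p m) :
    MemLp (fun w => u w * conj (coord w * f w)) p m := by
  refine MemLp.of_le hf ?_ ?_
  · exact hu.1.mul (Complex.continuous_conj.comp_aestronglyMeasurable
      (((map_continuous (fourier 1)).aestronglyMeasurable).mul hf.1))
  · filter_upwards [hu.2.1] with w hw
    rw [norm_mul, hw, one_mul, RCLike.norm_conj, norm_mul]
    rw [show ‖coord w‖ = 1 from Circle.norm_coe _, one_mul]

lemma C_mem_Ku (hu : IsInner u) {f : L2} (hf : f ∈ Ku u) :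
    toLp2 (fun w => u w * conj (coord w * (f : Circ → ℂ) w)) ∈ Ku u := by
  have hmem : MemLp (fun w => u w * conj (coord w * (f : Circ → ℂ) w)) 2 m :=
    memℒp_C hu (Lp.memLp f)
  rw [Ku, Submodule.mem_inf]
  constructor
  · refine mem_H2_of_ortho fun j hj => ?_
    set n : ℤ := -j - 1 with hn
    have hn0 : 0 ≤ n := by omega
    have hun : MemLp (fun w => u w * fourier n w) 2 m :=
      memℒp2_of_top (memℒp_top_mul (hu_top hu) (memℒp_top_fourier n))
    have hgen : toLp2 (fun w => u w * fourier n w) ∈ uH2 u := by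
      refine mem_uH2 (f := eL n.toNat) ?_ ?_
      · exact eL_mem_H2 n.toNat
      · filter_upwards [toLp2_coeFn hun, eL_coe n.toNat] with w h1 h2
        rw [h1, h2, Int.toNat_of_nonneg hn0]
    have horth : ⟪(toLp2 (fun w => u w * fourier n w) : L2), f⟫ = 0 :=
      (Submodule.mem_orthogonal _ _).mp (Ku_orth hf) _ hgen
    have hi : ⟪(eL j : L2), (toLp2 (fun w => u w * conj (coord w * (f : Circ → ℂ) w)) : L2)⟫ =
        conj ⟪(toLp2 (fun w => u w * fourier n w) : L2), f⟫ := by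
      rw [inner_eq_integral' (eL_coe j) (toLp2_coeFn hmem),
        inner_eq_integral' (toLp2_coeFn hun) (Filter.EventuallyEq.refl _ _), ← integral_conj]
      refine integral_congr_ae (Filter.Eventually.of_forall fun w => ?_)
      have e1 : fourier (-j) w = fourier n w * fourier 1 w := by
        rw [← fourier_add]
        congr 1
        rw [hn]
        ring
      have e2 : fourier (1 : ℤ) w * fourier (-1 : ℤ) w = 1 := by
        rw [← fourier_add, show (1 : ℤ) + (-1) = 0 by norm_num, fourier_zero]
      simp only [map_mul, Complex.conj_conj, coord]
      rw [← fourier_neg (n := j), ← fourier_neg (n := 1), e1]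
      linear_combination (fourier n w * u w * conj ((f : Circ → ℂ) w)) * e2
    rw [hi, horth, map_zero]
  · refine mem_orth_uH2 fun g hg y hy => ?_
    have hint : ⟪(toLp2 (fun w => u w * conj (coord w * (f : Circ → ℂ) w)) : L2), y⟫ =
        ∫ w, (conj (u w) * u w) * (coord w * (f : Circ → ℂ) w * (g : Circ → ℂ) w) ∂m := by
      rw [inner_eq_integral' (toLp2_coeFn hmem) hy]
      refine integral_congr_ae (Filter.Eventually.of_forall fun w => ?_)
      simp only [map_mul, Complex.conj_conj]
      ring
    rw [hint]
    have hint2 : (∫ w, (conj (u w) * u w) * (coord w * (f : Circ → ℂ) w * (g : Circ → ℂ) w) ∂m)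
        = ∫ w, fourier 1 w * (f : Circ → ℂ) w * (g : Circ → ℂ) w ∂m := by
      refine integral_congr_ae ?_
      filter_upwards [conj_u_mul_u hu] with w hw
      rw [hw, one_mul, coord]
    have hb1 : ∀ j : ℤ, 0 < j → (∫ w, fourier (1 : ℤ) w * fourier j w ∂m) = 0 := by
      intro j hj
      have : ∀ w : Circ, fourier (1 : ℤ) w * fourier j w = fourier (1 + j) w := fun w =>
        (fourier_add).symm
      rw [integral_congr_ae (Filter.Eventually.of_forall fun w => this w), integral_fourier,
        if_neg (by omega)]
    rw [hint2, master (memℒp_top_fourier 1) hb1 (Ku_le_H2 hf) hg, integral_fourier]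
    norm_num

lemma Cop_coe (hu : IsInner u) (φ : Ku u) :
    ((Cop u φ : Ku u) : L2) =
      toLp2 (fun w => u w * conj (coord w * ((φ : L2) : Circ → ℂ) w)) := by
  rw [Cop, CfunL2, Pu_id (C_mem_Ku hu φ.2)]

lemma Sop_eq (x : Ku u) :
    Sop u x = Pu u (toLp2 fun w => coord w * ((x : L2) : Circ → ℂ) w) := by
  rw [Sop]
  simp only [ContinuousLinearMap.comp_apply, Submodule.subtypeL_apply]
  rw [mulCLM_eq_toLp2]

lemma Pu_u_mul (hu : IsInner u) {f : L2} (hf : f ∈ H2) :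
    Pu u (toLp2 fun w => u w * (f : Circ → ℂ) w) = 0 :=
  Pu_zero (uH2_le_orthKu (mem_uH2 hf (toLp2_coeFn (memℒp_mul_of_top (hu_top hu) f))))

lemma Pu_conj_u_mul (hu : IsInner u) {f : L2} (hf : f ∈ Ku u) :
    Pu u (toLp2 fun w => conj (u w) * (f : Circ → ℂ) w) = 0 := by
  refine Pu_zero ?_
  rw [Submodule.mem_orthogonal]
  intro k hk
  have hmem : MemLp (fun w => conj (u w) * (f : Circ → ℂ) w) 2 m :=
    memℒp_mul_of_top (memℒp_top_conj (hu_top hu)) f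
  have hi : ⟪k, (toLp2 fun w => conj (u w) * (f : Circ → ℂ) w : L2)⟫ =
      ⟪(toLp2 (fun w => u w * (k : Circ → ℂ) w) : L2), f⟫ := by
    rw [inner_eq_integral' (Filter.EventuallyEq.refl _ _) (toLp2_coeFn hmem),
      inner_eq_integral' (toLp2_coeFn (memℒp_mul_of_top (hu_top hu) k))
        (Filter.EventuallyEq.refl _ _)]
    refine integral_congr_ae (Filter.Eventually.of_forall fun w => ?_)
    simp only [map_mul]
    ring
  rw [hi]
  exact (Submodule.mem_orthogonal _ _).mp (Ku_orth hf) _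
    (mem_uH2 (Ku_le_H2 hk) (toLp2_coeFn (memℒp_mul_of_top (hu_top hu) k)))

lemma eL0_decomp (hu : IsInner u) :
    (eL 0 : L2) = toLp2 (K0fun u) + conj (ev0 u) • toLp2 u := by
  rw [K0elt_eq hu]
  abel

lemma Pu_eL0 (hu : IsInner u) : Pu u (eL 0) = K0 u := by
  rw [eL0_decomp hu, map_add, (Pu u).map_smul]
  have h1 : Pu u (toLp2 u) = 0 := by
    have := Pu_u_mul hu (eL_mem_H2 0)
    simp only [Nat.cast_zero] at this
    have he : toLp2 (fun w => u w * ((eL 0 : L2) : Circ → ℂ) w) = toLp2 u := by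
      refine toLp2_congr (memℒp_mul_of_top (hu_top hu) (eL 0)) ?_
      filter_upwards [eL_coe 0] with w hw
      rw [hw, fourier_zero, mul_one]
    rw [he] at this
    rw [this]
  rw [h1, smul_zero, add_zero, K0]

lemma SCK0 (hu : IsInner u) : Sop u (Cop u (K0 u)) = -(ev0 u) • K0 u := by
  have hC := Cop_coe hu (K0 u)
  rw [Sop_eq]
  have hcoe : (((Cop u (K0 u) : Ku u) : L2) : Circ → ℂ) =ᵐ[m]
      fun w => u w * conj (coord w * K0fun u w) := by
    rw [hC]
    have h1 := toLp2_coeFn (memℒp_C (p := 2) hu (Lp.memLp ((K0 u : Ku u) : L2)))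
    refine h1.trans ?_
    have h2 : (((K0 u : Ku u) : L2) : Circ → ℂ) =ᵐ[m] K0fun u := by
      rw [K0_coe hu]
      exact toLp2_coeFn (memℒp2_of_top (memℒp_K0fun_top hu))
    filter_upwards [h2] with w hw
    rw [hw]
  have hmain : toLp2 (fun w => coord w * (((Cop u (K0 u) : Ku u) : L2) : Circ → ℂ) w) =
      toLp2 u - ev0 u • eL 0 := by
    apply Lp.ext
    have hml : MemLp (fun w => coord w * (((Cop u (K0 u) : Ku u) : L2) : Circ → ℂ) w) 2 m :=
      memℒp_mul_of_top memℒp_top_coord _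
    filter_upwards [toLp2_coeFn hml, hcoe, conj_u_mul_u hu,
      Lp.coeFn_sub (toLp2 u : L2) (ev0 u • toLp2 (K0fun u)), toLp2_u_coe hu,
      Lp.coeFn_sub (toLp2 u : L2) (ev0 u • eL 0),
      Lp.coeFn_smul (ev0 u) (eL 0 : L2), eL_coe 0] with w h1 h2 h3 h4 h5 h6 h7 h8
    rw [h1, h2, h6, Pi.sub_apply, h5, h7, Pi.smul_apply, h8, fourier_zero, smul_eq_mul, mul_one]
    have hz : coord w * conj (coord w) = 1 := by
      rw [Complex.mul_conj, ← Complex.sq_norm,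
        show ‖coord w‖ = 1 from Circle.norm_coe _, one_pow, Complex.ofReal_one]
    calc coord w * (u w * conj (coord w * K0fun u w))
        = (coord w * conj (coord w)) * (u w * conj (K0fun u w)) := by
          rw [map_mul]
          ring
      _ = u w * conj (K0fun u w) := by rw [hz, one_mul]
      _ = u w - ev0 u * (conj (u w) * u w) := by
          simp only [K0fun, map_sub, map_mul, map_one, Complex.conj_conj]
          ring
      _ = u w - ev0 u := by rw [h3, mul_one]
  rw [hmain, map_sub, (Pu u).map_smul]
  have h1 : Pu u (toLp2 u) = 0 := by
    have := Pu_u_mul hu (eL_mem_H2 0)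
    simp only [Nat.cast_zero] at this
    have he : toLp2 (fun w => u w * ((eL 0 : L2) : Circ → ℂ) w) = toLp2 u := by
      refine toLp2_congr (memℒp_mul_of_top (hu_top hu) (eL 0)) ?_
      filter_upwards [eL_coe 0] with w hw
      rw [hw, fourier_zero, mul_one]
    rw [he] at this
    rw [this]
  rw [h1, Pu_eL0 hu]
  simp

end TTO
namespace TTO

local notation "⟪" x ", " y "⟫" => @inner ℂ _ _ x y

variable {u : Circ → ℂ}

lemma memℒp_mul_of_top' {g : Circ → ℂ} (hg : MemLp g ⊤ m) {f : Circ → ℂ}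
    (hf : MemLp f 2 m) : MemLp (fun w => f w * g w) 2 m := by
  have h := hf.smul (r := 2) hg
  rw [smul_fun_eq_mul] at h
  rwa [show (fun w => g w * f w) = fun w => f w * g w from funext fun w => mul_comm _ _] at h

lemma int_fourier_u (hu : IsInner u) {k : ℤ} (hk : 0 < k) :
    (∫ w, fourier k w * u w ∂m) = 0 := by
  have h := H2_ortho hu.2.2 (j := -k) (by omega)
  rw [inner_eq_integral' (eL_coe (-k)) (toLp2_u_coe hu)] at h
  rw [← h]
  refine integral_congr_ae (Filter.Eventually.of_forall fun w => ?_)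
  beta_reduce
  rw [← fourier_neg, neg_neg]

lemma uH2_le_H2 (hu : IsInner u) : uH2 u ≤ H2 := by
  refine Submodule.topologicalClosure_minimal _ ?_
    (Submodule.isClosed_topologicalClosure _)
  refine Submodule.span_le.mpr ?_
  rintro g ⟨f, hf, hg⟩
  refine mem_H2_of_ortho fun j hj => ?_
  have hb : MemLp (fun w => fourier (-j) w * u w) ⊤ m :=
    memℒp_top_mul (memℒp_top_fourier (-j)) (hu_top hu)
  have h1 : ∀ i : ℤ, 0 < i →
      (∫ w, (fourier (-j) w * u w) * fourier i w ∂m) = 0 := by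
    intro i hi
    have : ∀ w : Circ, (fourier (-j) w * u w) * fourier i w = fourier (-j + i) w * u w :=
      fun w => by rw [fourier_add]; ring
    rw [integral_congr_ae (Filter.Eventually.of_forall this), int_fourier_u hu (by omega)]
  have hm := master hb h1 hf (eL_mem_H2 0)
  simp only [Nat.cast_zero] at hm
  have hz : (∫ w, fourier (-j) w * u w ∂m) = 0 := int_fourier_u hu (by omega)
  have hl : (∫ w, (fourier (-j) w * u w) * (f : Circ → ℂ) w * ((eL 0 : L2) : Circ → ℂ) w ∂m)
      = ⟪(eL j : L2), g⟫ := by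
    rw [inner_eq_integral' (eL_coe j) hg]
    refine integral_congr_ae ?_
    filter_upwards [eL_coe 0] with w hw
    rw [hw, fourier_zero, mul_one, ← fourier_neg]
    ring
  rw [hl, hz] at hm
  rw [hm]
  ring

lemma mem_uH2_of_orthKu (hu : IsInner u) {x : L2} (hx : x ∈ H2) (ho : x ∈ (Ku u)ᗮ) :
    x ∈ uH2 u := by
  haveI : CompleteSpace (uH2 u) :=
    @IsClosed.completeSpace_coe _ _ _ _ (Submodule.isClosed_topologicalClosure _)
  set y := (uH2 u).orthogonalProjectionOnto x with hy
  have hr : x - (y : L2) ∈ (uH2 u)ᗮ := Submodule.sub_starProjection_mem_orthogonal x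
  have hrK : x - (y : L2) ∈ Ku u :=
    Submodule.mem_inf.mpr ⟨sub_mem hx (uH2_le_H2 hu y.2), hr⟩
  have h0 : ⟪x - (y : L2), x - (y : L2)⟫ = (0 : ℂ) := by
    rw [inner_sub_right]
    have ha : ⟪x - (y : L2), x⟫ = (0 : ℂ) :=
      (Submodule.mem_orthogonal _ _).mp ho _ hrK
    have hb : ⟪x - (y : L2), (y : L2)⟫ = (0 : ℂ) :=
      (Submodule.mem_orthogonal' _ _).mp hr _ y.2
    rw [ha, hb, sub_zero]
  have hxy : x = (y : L2) := sub_eq_zero.mp (inner_self_eq_zero.mp h0)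
  rw [hxy]
  exact y.2

/-- Key vanishing: `P_u (conj(x) f) = 0` for `x ∈ uH²` and bounded `f ∈ K_u`. -/
lemma Pu_conj_uH2_mul (hu : IsInner u) {x : L2} (hx : x ∈ uH2 u) (f : Ku u)
    (hf : MemLp (((f : L2) : Circ → ℂ)) ⊤ m) :
    Pu u (toLp2 fun w => conj ((x : Circ → ℂ) w) * ((f : L2) : Circ → ℂ) w) = 0 := by
  set fr : Circ → ℂ := ((f : L2) : Circ → ℂ) with hfr
  -- the conjugate `C f` and its properties
  set Cfe : L2 := toLp2 (fun w => u w * conj (coord w * fr w)) with hCfe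
  have hCfeK : Cfe ∈ Ku u := C_mem_Ku hu f.2
  have hCfe_coe : (Cfe : Circ → ℂ) =ᵐ[m] fun w => u w * conj (coord w * fr w) :=
    toLp2_coeFn (memℒp_C hu (Lp.memLp (f : L2)))
  have hCfe_top : MemLp ((Cfe : L2) : Circ → ℂ) ⊤ m := by
    refine MemLp.of_le hf (Lp.aestronglyMeasurable Cfe) ?_
    filter_upwards [hCfe_coe, hu.2.1] with w h1 h2
    rw [h1, norm_mul, h2, one_mul, RCLike.norm_conj, norm_mul,
      show ‖coord w‖ = 1 from Circle.norm_coe _, one_mul]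
  have hb : MemLp (fun w => coord w * ((Cfe : L2) : Circ → ℂ) w) ⊤ m :=
    memℒp_top_mul memℒp_top_coord hCfe_top
  have hbf : ∀ i : ℤ, 0 ≤ i →
      (∫ w, (coord w * ((Cfe : L2) : Circ → ℂ) w) * fourier i w ∂m) = 0 := by
    intro i hi
    have h := H2_ortho (Ku_le_H2 hCfeK) (j := -(1 + i)) (by omega)
    rw [inner_eq_integral' (eL_coe (-(1 + i))) (Filter.EventuallyEq.refl _ _)] at h
    rw [← h]
    refine integral_congr_ae (Filter.Eventually.of_forall fun w => ?_)
    beta_reduce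
    rw [← fourier_neg, neg_neg, fourier_add, coord]
    ring
  -- vanishing of `G` on `uH2`
  refine Pu_zero ?_
  rw [Submodule.mem_orthogonal]
  intro k hk
  have hmem2 : MemLp (fun w => conj ((x : Circ → ℂ) w) * fr w) 2 m := by
    have := memℒp_mul_of_top' hf (memℒp_conj (Lp.memLp x))
    exact this
  have hkcf : MemLp (fun w => (k : Circ → ℂ) w * conj (fr w)) 2 m :=
    memℒp_mul_of_top' (memℒp_top_conj hf) (Lp.memLp k)
  set G : L2 →L[ℂ] ℂ := intMulCLM (toLp2 fun w => (k : Circ → ℂ) w * conj (fr w)) with hG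
  have hGval : ∀ z : L2, G z = ∫ w, (k : Circ → ℂ) w * conj (fr w) * (z : Circ → ℂ) w ∂m := by
    intro z
    rw [hG, intMulCLM_eq]
    refine integral_congr_ae ?_
    filter_upwards [toLp2_coeFn hkcf] with w hw
    rw [hw]
  have hGzero : uH2 u ≤ LinearMap.ker (G : L2 →ₗ[ℂ] ℂ) := by
    refine Submodule.topologicalClosure_minimal _ ?_ (ContinuousLinearMap.isClosed_ker _)
    refine Submodule.span_le.mpr ?_
    rintro g ⟨h, hh, hgh⟩
    have hval : G g = ∫ w, (coord w * ((Cfe : L2) : Circ → ℂ) w) * (h : Circ → ℂ) w *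
        (k : Circ → ℂ) w ∂m := by
      rw [hGval]
      refine integral_congr_ae ?_
      filter_upwards [hgh, hCfe_coe, conj_u_mul_u hu] with w h1 h2 h3
      rw [h1, h2]
      have hzz : coord w * conj (coord w) = 1 := by
        rw [Complex.mul_conj, ← Complex.sq_norm,
          show ‖coord w‖ = 1 from Circle.norm_coe _, one_pow, Complex.ofReal_one]
      rw [map_mul]
      calc (k : Circ → ℂ) w * conj (fr w) * (u w * (h : Circ → ℂ) w)
          = ((conj (u w) * u w) * (coord w * conj (coord w))) *
              ((k : Circ → ℂ) w * conj (fr w) * (u w * (h : Circ → ℂ) w)) := by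
            rw [hzz, h3, one_mul, one_mul]
        _ = coord w * (u w * (conj (coord w) * conj (fr w))) * (h : Circ → ℂ) w *
              (k : Circ → ℂ) w := by
            rw [h3]
            ring
    have h1' : ∀ j : ℤ, 0 < j →
        (∫ w, (coord w * ((Cfe : L2) : Circ → ℂ) w) * fourier j w ∂m) = 0 :=
      fun j hj => hbf j (le_of_lt hj)
    have hm := master hb h1' hh (Ku_le_H2 hk)
    have hb0 : (∫ w, coord w * ((Cfe : L2) : Circ → ℂ) w ∂m) = 0 := by
      have h0 := hbf 0 le_rfl
      rw [← h0]
      refine integral_congr_ae (Filter.Eventually.of_forall fun w => ?_)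
      beta_reduce
      rw [fourier_zero, mul_one]
    have hfin : G g = 0 := by
      rw [hval, hm, hb0]
      ring
    exact hfin
  have hGx : G x = 0 := hGzero hx
  have hkey : ⟪k, (toLp2 fun w => conj ((x : Circ → ℂ) w) * fr w : L2)⟫ = conj (G x) := by
    rw [hGval, ← integral_conj,
      inner_eq_integral' (Filter.EventuallyEq.refl _ _) (toLp2_coeFn hmem2)]
    refine integral_congr_ae (Filter.Eventually.of_forall fun w => ?_)
    simp only [map_mul, Complex.conj_conj]
    ring
  rw [hkey, hGx, map_zero]

end TTO
namespace TTO

local notation "⟪" x ", " y "⟫" => @inner ℂ _ _ x y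

variable {u : Circ → ℂ}

lemma K0_coeFn (hu : IsInner u) : (((K0 u : Ku u) : L2) : Circ → ℂ) =ᵐ[m] K0fun u := by
  rw [K0_coe hu]
  exact toLp2_coeFn (memℒp2_of_top (memℒp_K0fun_top hu))

lemma coe_sub_smul (hu : IsInner u) (φ : Ku u) (t : ℂ) :
    (((φ - t • K0 u : Ku u) : L2) : Circ → ℂ) =ᵐ[m]
      fun w => ((φ : L2) : Circ → ℂ) w - t * K0fun u w := by
  have hsub : ((φ - t • K0 u : Ku u) : L2) = (φ : L2) - t • ((K0 u : Ku u) : L2) := by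
    push_cast
    ring_nf
  rw [hsub]
  filter_upwards [Lp.coeFn_sub (φ : L2) (t • ((K0 u : Ku u) : L2)),
    Lp.coeFn_smul t ((K0 u : Ku u) : L2), K0_coeFn hu] with w h1 h2 h3
  rw [h1, Pi.sub_apply, h2, Pi.smul_apply, h3, smul_eq_mul]

lemma integral_K0fun (hu : IsInner u) :
    (∫ w, K0fun u w ∂m) = 1 - conj (ev0 u) * ev0 u := by
  have h : (∫ w, K0fun u w ∂m) =
      (∫ _w, (1 : ℂ) ∂m) - ∫ w, conj (ev0 u) * u w ∂m := by
    rw [← integral_sub (integrable_const 1) (((hu_2 hu).integrable (by norm_num)).const_mul _)]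
    rfl
  rw [h, integral_const_mul]
  simp [ev0]

lemma integrable_K0fun (hu : IsInner u) : Integrable (K0fun u) m :=
  (memℒp2_of_top (memℒp_K0fun_top hu)).integrable (by norm_num)

lemma ev0_sub_smul (hu : IsInner u) (φ : Ku u) (t : ℂ) :
    ev0 (((φ - t • K0 u : Ku u) : L2) : Circ → ℂ) =
      ev0 ((φ : L2) : Circ → ℂ) - t * (1 - conj (ev0 u) * ev0 u) := by
  rw [ev0, integral_congr_ae (coe_sub_smul hu φ t),
    integral_sub (integrable_L2 (φ : L2)) ((integrable_K0fun hu).const_mul t),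
    integral_const_mul, integral_K0fun hu]
  rfl

/-- The normalized element `φ₀` and the fact `ev0 φ₀ = 0`. -/
lemma ev0_normalized (hu : IsInner u) (hnc : Nonconst u) (φ : Ku u) :
    ev0 (((φ - (ev0 ((φ : L2) : Circ → ℂ) / (1 - conj (ev0 u) * ev0 u)) • K0 u : Ku u) : L2) :
      Circ → ℂ) = 0 := by
  rw [ev0_sub_smul hu, div_mul_cancel₀ _ (one_sub_ne hu hnc), sub_self]

end TTO
/-- Any TTO of type `α ∈ ℂ` has a symbol of the form
`φ₀ + α·conj(S(Cφ₀)) + c·K₀` with `φ₀ ∈ K_u`, `φ₀(0) = 0`, `c ∈ ℂ`; and any TTO of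
type `∞` has a symbol of the form `conj(φ₀) + c·K₀` with `φ₀ ∈ K_u`, `φ₀(0) = 0`. -/
theorem TTO.normalized_symbol
    (u : Circ → ℂ) (hu : IsInner u) (hnc : Nonconst u) (A : Ku u →L[ℂ] Ku u) :
    (∀ α : ℂ, IsTypeC u α A → ∃ (φ₀ : Ku u) (c : ℂ),
      ev0 ((φ₀ : L2) : Circ → ℂ) = 0 ∧
      IsTTO u (fun w => ((φ₀ : L2) : Circ → ℂ) w +
        α * conj (((Sop u (Cop u φ₀) : L2) : Circ → ℂ) w) + c * K0fun u w) A) ∧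
    (IsTypeInf u A → ∃ (φ₀ : Ku u) (c : ℂ),
      ev0 ((φ₀ : L2) : Circ → ℂ) = 0 ∧
      IsTTO u (fun w => conj (((φ₀ : L2) : Circ → ℂ) w) + c * K0fun u w) A) := by
  classical
  set u0 : ℂ := ev0 u with hu0
  have hK0c := K0_coeFn hu
  constructor
  · -- finite type α
    rintro α ⟨φ, c, hA⟩
    set lam : ℂ := ev0 ((φ : L2) : Circ → ℂ) / (1 - conj u0 * u0) with hlam
    set φ₀ : Ku u := φ - lam • K0 u with hφ₀def
    have hev : ev0 ((φ₀ : L2) : Circ → ℂ) = 0 := ev0_normalized hu hnc φ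
    refine ⟨φ₀, lam + c - α * lam * conj u0, hev, ?_⟩
    have hcoe0 := coe_sub_smul hu φ lam
    -- the conjugation identity
    have hCmem : ∀ g : Ku u, MemLp (fun w => u w * conj (coord w * ((g : L2) : Circ → ℂ) w)) 2 m :=
      fun g => memℒp_C hu (Lp.memLp (g : L2))
    have htl : (toLp2 fun w => u w * conj (coord w * ((φ₀ : L2) : Circ → ℂ) w)) =
        (toLp2 fun w => u w * conj (coord w * ((φ : L2) : Circ → ℂ) w)) -
          conj lam • (toLp2 fun w => u w * conj (coord w * (((K0 u : Ku u) : L2) : Circ → ℂ) w)) := by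
      apply Lp.ext
      filter_upwards [toLp2_coeFn (hCmem φ₀), toLp2_coeFn (hCmem φ), toLp2_coeFn (hCmem (K0 u)),
        Lp.coeFn_sub (toLp2 fun w => u w * conj (coord w * ((φ : L2) : Circ → ℂ) w))
          (conj lam • (toLp2 fun w => u w * conj (coord w * (((K0 u : Ku u) : L2) : Circ → ℂ) w))),
        Lp.coeFn_smul (conj lam)
          (toLp2 fun w => u w * conj (coord w * (((K0 u : Ku u) : L2) : Circ → ℂ) w)),
        hcoe0, hK0c] with w h1 h2 h3 h4 h5 h6 h7
      rw [h1, h4, Pi.sub_apply, h2, h5, Pi.smul_apply, h3, h6, h7, smul_eq_mul]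
      simp only [map_mul, map_sub, Complex.conj_conj]
      ring
    have hCφ₀ : Cop u φ₀ = Cop u φ - conj lam • Cop u (K0 u) := by
      unfold Cop CfunL2
      rw [htl, map_sub, (Pu u).map_smul]
    have hSCφ₀ : Sop u (Cop u φ₀) = Sop u (Cop u φ) + (conj lam * u0) • K0 u := by
      rw [hCφ₀, map_sub, (Sop u).map_smul, SCK0 hu, smul_smul]
      rw [show conj lam * -ev0 u = -(conj lam * u0) by rw [hu0]; ring]
      module
    have hScoe : (((Sop u (Cop u φ₀) : Ku u) : L2) : Circ → ℂ) =ᵐ[m]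
        fun w => (((Sop u (Cop u φ) : Ku u) : L2) : Circ → ℂ) w + (conj lam * u0) * K0fun u w := by
      have hSc : ((Sop u (Cop u φ₀) : Ku u) : L2) =
          ((Sop u (Cop u φ) : Ku u) : L2) + (conj lam * u0) • ((K0 u : Ku u) : L2) := by
        rw [hSCφ₀]
        push_cast
        ring_nf
      rw [hSc]
      filter_upwards [Lp.coeFn_add ((Sop u (Cop u φ) : Ku u) : L2)
        ((conj lam * u0) • ((K0 u : Ku u) : L2)),
        Lp.coeFn_smul (conj lam * u0) ((K0 u : Ku u) : L2), hK0c] with w h1 h2 h3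
      rw [h1, Pi.add_apply, h2, Pi.smul_apply, h3, smul_eq_mul]
    -- the symbols
    set a : ℂ := (c - α * lam * conj u0) * conj u0 with ha
    set b : ℂ := α * lam * conj u0 * u0 with hb
    set Dsym : Circ → ℂ := fun w => ((φ₀ : L2) : Circ → ℂ) w +
        α * conj (((Sop u (Cop u φ₀) : L2) : Circ → ℂ) w) +
        (lam + c - α * lam * conj u0) * K0fun u w with hDsym
    have hsym : typeSymbol u α φ c =ᵐ[m]
        fun w => Dsym w + a * u w + b * conj (u w) := by
      filter_upwards [hcoe0, hScoe] with w h1 h2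
      rw [← hφ₀def] at h1
      simp only [typeSymbol, hDsym, ha, hb, hu0, h1, h2, K0fun, map_add, map_mul, map_sub, map_one,
        Complex.conj_conj]
      ring
    -- membership facts
    have hO2 : MemLp (typeSymbol u α φ c) 2 m := by
      have h1 : MemLp (fun w => ((φ : L2) : Circ → ℂ) w) 2 m := Lp.memLp _
      have h2 : MemLp (fun w =>
          α * conj (((Sop u (Cop u φ) : Ku u) : L2) w)) 2 m :=
        (memℒp_conj (Lp.memLp _)).const_mul α
      exact (h1.add h2).add (memLp_const c)
    have hD2 : MemLp Dsym 2 m := by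
      have h1 : MemLp (fun w => ((φ₀ : L2) : Circ → ℂ) w) 2 m := Lp.memLp _
      have h2 : MemLp (fun w =>
          α * conj (((Sop u (Cop u φ₀) : Ku u) : L2) w)) 2 m :=
        (memℒp_conj (Lp.memLp _)).const_mul α
      have h3 : MemLp (fun w => (lam + c - α * lam * conj u0) * K0fun u w) 2 m :=
        (memℒp2_of_top (memℒp_K0fun_top hu)).const_mul _
      exact (h1.add h2).add h3
    -- conclusion
    intro f hfb
    rw [hA f hfb]
    have hOf : (toLp2 fun w => typeSymbol u α φ c w * ((f : L2) : Circ → ℂ) w) =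
        (toLp2 fun w => Dsym w * ((f : L2) : Circ → ℂ) w) +
          a • (toLp2 fun w => u w * ((f : L2) : Circ → ℂ) w) +
          b • (toLp2 fun w => conj (u w) * ((f : L2) : Circ → ℂ) w) := by
      have hstep : (toLp2 fun w => typeSymbol u α φ c w * ((f : L2) : Circ → ℂ) w) =
          toLp2 fun w => (Dsym w + a * u w + b * conj (u w)) * ((f : L2) : Circ → ℂ) w := by
        refine toLp2_congr (memℒp_mul_of_top' hfb hO2) ?_
        filter_upwards [hsym] with w hw
        rw [hw]
      rw [hstep]
      have hmemRHS : MemLp (fun w => (Dsym w + a * u w + b * conj (u w)) *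
          ((f : L2) : Circ → ℂ) w) 2 m :=
        MemLp.ae_eq (by filter_upwards [hsym] with w hw; rw [hw])
          (memℒp_mul_of_top' hfb hO2)
      apply Lp.ext
      filter_upwards [toLp2_coeFn hmemRHS,
        Lp.coeFn_add ((toLp2 fun w => Dsym w * ((f : L2) : Circ → ℂ) w) +
          a • (toLp2 fun w => u w * ((f : L2) : Circ → ℂ) w))
          (b • (toLp2 fun w => conj (u w) * ((f : L2) : Circ → ℂ) w)),
        Lp.coeFn_add (toLp2 fun w => Dsym w * ((f : L2) : Circ → ℂ) w)
          (a • (toLp2 fun w => u w * ((f : L2) : Circ → ℂ) w)),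
        Lp.coeFn_smul a (toLp2 fun w => u w * ((f : L2) : Circ → ℂ) w),
        Lp.coeFn_smul b (toLp2 fun w => conj (u w) * ((f : L2) : Circ → ℂ) w),
        toLp2_coeFn (memℒp_mul_of_top' hfb hD2),
        toLp2_coeFn (memℒp_mul_of_top (hu_top hu) (f : L2)),
        toLp2_coeFn (memℒp_mul_of_top (memℒp_top_conj (hu_top hu)) (f : L2))] with
          w h1 h2 h3 h4 h5 h6 h7 h8
      rw [h1, h2, Pi.add_apply, h3, Pi.add_apply, h4, h5, Pi.smul_apply, Pi.smul_apply,
        h6, h7, h8, smul_eq_mul, smul_eq_mul]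
      ring
    rw [hOf, map_add, map_add, (Pu u).map_smul, (Pu u).map_smul,
      Pu_u_mul hu (Ku_le_H2 f.2), Pu_conj_u_mul hu f.2, smul_zero, smul_zero,
      add_zero, add_zero]
  · -- type ∞
    rintro ⟨ψ, hψ2, hψH2, hA⟩
    set φ1 : Ku u := Pu u (toLp2 ψ) with hφ1
    set X : L2 := toLp2 ψ - (φ1 : L2) with hX
    have hXu : X ∈ uH2 u :=
      mem_uH2_of_orthKu hu (sub_mem hψH2 (Ku_le_H2 φ1.2))
        (Submodule.sub_starProjection_mem_orthogonal (toLp2 ψ))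
    set nu : ℂ := ev0 ((φ1 : L2) : Circ → ℂ) / (1 - conj u0 * u0) with hnu
    set φ₀ : Ku u := φ1 - nu • K0 u with hφ₀def
    have hev : ev0 ((φ₀ : L2) : Circ → ℂ) = 0 := ev0_normalized hu hnc φ1
    refine ⟨φ₀, conj nu, hev, ?_⟩
    have hcoe0 := coe_sub_smul hu φ1 nu
    set a : ℂ := conj nu * conj u0 with ha
    set b : ℂ := -(conj nu * u0) with hb
    set Tsym : Circ → ℂ := fun w => conj (((φ₀ : L2) : Circ → ℂ) w) + conj nu * K0fun u w
      with hTsym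
    have hXcoe : (X : Circ → ℂ) =ᵐ[m] fun w => ψ w - ((φ1 : L2) : Circ → ℂ) w := by
      rw [hX]
      filter_upwards [Lp.coeFn_sub (toLp2 ψ) (φ1 : L2), toLp2_coeFn hψ2] with w h1 h2
      rw [h1, Pi.sub_apply, h2]
    have hsym : (fun w => conj (ψ w)) =ᵐ[m]
        fun w => Tsym w + conj ((X : Circ → ℂ) w) + a * u w + b * conj (u w) := by
      filter_upwards [hcoe0, hXcoe] with w h1 h2
      simp only [hTsym, hφ₀def, ha, hb, hu0, h1, h2, K0fun, map_add, map_mul, map_sub, map_one, Complex.conj_conj]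
      ring
    have hT2 : MemLp Tsym 2 m := by
      have h1 : MemLp (fun w => conj (((φ₀ : L2) : Circ → ℂ) w)) 2 m :=
        memℒp_conj (Lp.memLp _)
      have h3 : MemLp (fun w => conj nu * K0fun u w) 2 m :=
        (memℒp2_of_top (memℒp_K0fun_top hu)).const_mul _
      exact h1.add h3
    intro f hfb
    rw [hA f hfb]
    have hOf : (toLp2 fun w => conj (ψ w) * ((f : L2) : Circ → ℂ) w) =
        (toLp2 fun w => Tsym w * ((f : L2) : Circ → ℂ) w) +
          (toLp2 fun w => conj ((X : Circ → ℂ) w) * ((f : L2) : Circ → ℂ) w) +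
          a • (toLp2 fun w => u w * ((f : L2) : Circ → ℂ) w) +
          b • (toLp2 fun w => conj (u w) * ((f : L2) : Circ → ℂ) w) := by
      have hstep : (toLp2 fun w => conj (ψ w) * ((f : L2) : Circ → ℂ) w) =
          toLp2 fun w => (Tsym w + conj ((X : Circ → ℂ) w) + a * u w + b * conj (u w)) *
            ((f : L2) : Circ → ℂ) w := by
        refine toLp2_congr (memℒp_mul_of_top' hfb (memℒp_conj hψ2)) ?_
        filter_upwards [hsym] with w hw
        rw [hw]
      rw [hstep]
      have hmemRHS : MemLp (fun w => (Tsym w + conj ((X : Circ → ℂ) w) + a * u w +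
          b * conj (u w)) * ((f : L2) : Circ → ℂ) w) 2 m :=
        MemLp.ae_eq (by filter_upwards [hsym] with w hw; rw [hw])
          (memℒp_mul_of_top' hfb (memℒp_conj hψ2))
      apply Lp.ext
      filter_upwards [toLp2_coeFn hmemRHS,
        Lp.coeFn_add ((toLp2 fun w => Tsym w * ((f : L2) : Circ → ℂ) w) +
          (toLp2 fun w => conj ((X : Circ → ℂ) w) * ((f : L2) : Circ → ℂ) w) +
          a • (toLp2 fun w => u w * ((f : L2) : Circ → ℂ) w))
          (b • (toLp2 fun w => conj (u w) * ((f : L2) : Circ → ℂ) w)),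
        Lp.coeFn_add ((toLp2 fun w => Tsym w * ((f : L2) : Circ → ℂ) w) +
          (toLp2 fun w => conj ((X : Circ → ℂ) w) * ((f : L2) : Circ → ℂ) w))
          (a • (toLp2 fun w => u w * ((f : L2) : Circ → ℂ) w)),
        Lp.coeFn_add (toLp2 fun w => Tsym w * ((f : L2) : Circ → ℂ) w)
          (toLp2 fun w => conj ((X : Circ → ℂ) w) * ((f : L2) : Circ → ℂ) w),
        Lp.coeFn_smul a (toLp2 fun w => u w * ((f : L2) : Circ → ℂ) w),
        Lp.coeFn_smul b (toLp2 fun w => conj (u w) * ((f : L2) : Circ → ℂ) w),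
        toLp2_coeFn (memℒp_mul_of_top' hfb hT2),
        toLp2_coeFn (memℒp_mul_of_top' hfb (memℒp_conj (Lp.memLp X))),
        toLp2_coeFn (memℒp_mul_of_top (hu_top hu) (f : L2)),
        toLp2_coeFn (memℒp_mul_of_top (memℒp_top_conj (hu_top hu)) (f : L2))] with
          w h1 h2 h3 h4 h5 h6 h7 h8 h9 h10
      rw [h1, h2, Pi.add_apply, h3, Pi.add_apply, h4, Pi.add_apply, h5, Pi.smul_apply,
        h6, Pi.smul_apply, h7, h8, h9, h10, smul_eq_mul, smul_eq_mul]
      ring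
    rw [hOf, map_add, map_add, map_add, (Pu u).map_smul, (Pu u).map_smul,
      Pu_u_mul hu (Ku_le_H2 f.2), Pu_conj_u_mul hu f.2,
      Pu_conj_uH2_mul hu hXu f hfb, smul_zero, smul_zero,
      add_zero, add_zero, add_zero]
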